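/- Let 𝒢₁ and 𝒢₂ be finite graphs at least one of which is not complete, and let 𝒢₁ ⋆ 𝒢₂ be their join. Then γ(𝒢₁ ⋆ 𝒢₂) = max(γ(𝒢₁), γ(𝒢₂)). -/

import Mathlib

/-- A clique collection in `G`. -/
def IsCliqueCollection {V : Type*} (G : SimpleGraph V) (𝒞 : Finset (Finset V)) : Prop :=
  (∀ C ∈ 𝒞, C.Nonempty ∧ G.IsClique (C : Set V)) ∧
  (𝒞 : Set (Finset V)).Pairwise fun C D => ∀ v ∈ C, ∀ w ∈ D, v ≠ w ∧ ¬ G.Adj v w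

/-- The weight `w(𝒞) = Σ_i (1 - 2^{-|𝒞_i|})` of a clique collection. -/
noncomputable def cliqueCollectionWeight {V : Type*} (𝒞 : Finset (Finset V)) : ℝ :=
  ∑ C ∈ 𝒞, (1 - (1 / 2 : ℝ) ^ C.card)

/-- The set of weights of clique collections of `G`; `γ(G)` is its greatest element. -/
def gammaSet {V : Type*} (G : SimpleGraph V) : Set ℝ :=
  {x : ℝ | ∃ 𝒞 : Finset (Finset V), IsCliqueCollection G 𝒞 ∧ x = cliqueCollectionWeight 𝒞}

/-- The join of two graphs: adjacency within each side is unchanged, and every vertex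
of one side is adjacent to every vertex of the other. -/
def SimpleGraph.graphJoin {V₁ V₂ : Type*} (G₁ : SimpleGraph V₁) (G₂ : SimpleGraph V₂) :
    SimpleGraph (V₁ ⊕ V₂) where
  Adj x y :=
    match x, y with
    | .inl a, .inl b => G₁.Adj a b
    | .inr a, .inr b => G₂.Adj a b
    | .inl _, .inr _ => True
    | .inr _, .inl _ => True
  symm := by constructor; rintro (a | a) (b | b) h
             · exact G₁.symm.symm _ _ h
             · trivial
             · trivial
             · exact G₂.symm.symm _ _ h
  loopless := by constructor; rintro (a | a) h
                 · exact G₁.loopless.irrefl a h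
                 · exact G₂.loopless.irrefl a h

lemma push_cliqueCollection {V W : Type*} (G : SimpleGraph V) (H : SimpleGraph W) (f : V ↪ W)
    (hadj : ∀ a b, H.Adj (f a) (f b) ↔ G.Adj a b)
    (𝒞 : Finset (Finset V)) (h : IsCliqueCollection G 𝒞) :
    ∃ 𝒞' : Finset (Finset W), IsCliqueCollection H 𝒞' ∧
      cliqueCollectionWeight 𝒞' = cliqueCollectionWeight 𝒞 := by
  classical
  refine ⟨𝒞.image (fun C => C.map f), ⟨?_, ?_⟩, ?_⟩
  · intro C' hC'
    obtain ⟨C, hC, rfl⟩ := Finset.mem_image.mp hC'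
    obtain ⟨⟨x, hx⟩, hclique⟩ := h.1 C hC
    refine ⟨⟨f x, Finset.mem_map_of_mem _ hx⟩, ?_⟩
    intro u hu v hv huv
    simp only [Finset.coe_map, Set.mem_image, Finset.mem_coe] at hu hv
    obtain ⟨a, ha, rfl⟩ := hu
    obtain ⟨b, hb, rfl⟩ := hv
    exact (hadj a b).mpr (hclique ha hb (fun e => huv (by rw [e])))
  · intro C' hC' D' hD' hne
    simp only [Finset.coe_image, Set.mem_image, Finset.mem_coe] at hC' hD'
    obtain ⟨C, hC, rfl⟩ := hC'
    obtain ⟨D, hD, rfl⟩ := hD'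
    have hCD : C ≠ D := fun e => hne (by rw [e])
    intro u hu v hv
    obtain ⟨a, ha, rfl⟩ := Finset.mem_map.mp hu
    obtain ⟨b, hb, rfl⟩ := Finset.mem_map.mp hv
    obtain ⟨hab, hnadj⟩ := h.2 hC hD hCD a ha b hb
    exact ⟨fun e => hab (f.injective e), fun e => hnadj ((hadj a b).mp e)⟩
  · rw [cliqueCollectionWeight, Finset.sum_image
      (fun C _ D _ e => Finset.map_injective f e)]
    simp [cliqueCollectionWeight]

lemma pull_cliqueCollection {V W : Type*} (G : SimpleGraph V) (H : SimpleGraph W) (f : V ↪ W)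
    (hadj : ∀ a b, H.Adj (f a) (f b) ↔ G.Adj a b)
    (𝒞 : Finset (Finset W)) (h : IsCliqueCollection H 𝒞)
    (hr : ∀ C ∈ 𝒞, ∀ x ∈ C, x ∈ Set.range f) :
    ∃ 𝒞' : Finset (Finset V), IsCliqueCollection G 𝒞' ∧
      cliqueCollectionWeight 𝒞' = cliqueCollectionWeight 𝒞 := by
  classical
  have key : ∀ C ∈ 𝒞, (C.preimage f f.injective.injOn).map f = C := by
    intro C hC
    ext x
    simp only [Finset.mem_map, Finset.mem_preimage]
    constructor
    · rintro ⟨a, ha, rfl⟩; exact ha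
    · intro hx
      obtain ⟨a, rfl⟩ := hr C hC x hx
      exact ⟨a, hx, rfl⟩
  have hinj : ∀ C ∈ 𝒞, ∀ D ∈ 𝒞,
      C.preimage f f.injective.injOn = D.preimage f f.injective.injOn → C = D := by
    intro C hC D hD e
    rw [← key C hC, ← key D hD, e]
  refine ⟨𝒞.image (fun C => C.preimage f f.injective.injOn), ⟨?_, ?_⟩, ?_⟩
  · intro C' hC'
    obtain ⟨C, hC, rfl⟩ := Finset.mem_image.mp hC'
    obtain ⟨⟨x, hx⟩, hclique⟩ := h.1 C hC
    obtain ⟨a, rfl⟩ := hr C hC x hx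
    refine ⟨⟨a, Finset.mem_preimage.mpr hx⟩, ?_⟩
    intro u hu v hv huv
    simp only [Finset.mem_coe, Finset.mem_preimage] at hu hv
    exact (hadj u v).mp (hclique hu hv (fun e => huv (f.injective e)))
  · intro C' hC' D' hD' hne
    simp only [Finset.coe_image, Set.mem_image, Finset.mem_coe] at hC' hD'
    obtain ⟨C, hC, rfl⟩ := hC'
    obtain ⟨D, hD, rfl⟩ := hD'
    have hCD : C ≠ D := fun e => hne (by rw [e])
    intro u hu v hv
    rw [Finset.mem_preimage] at hu hv
    obtain ⟨hab, hnadj⟩ := h.2 hC hD hCD (f u) hu (f v) hv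
    exact ⟨fun e => hab (by rw [e]), fun e => hnadj ((hadj u v).mpr e)⟩
  · rw [cliqueCollectionWeight, Finset.sum_image (fun C hC D hD e => hinj C hC D hD e)]
    apply Finset.sum_congr rfl
    intro C hC
    rw [← Finset.card_map f, key C hC]

lemma one_le_gamma {V : Type*} (G : SimpleGraph V) (v w : V) (hvw : v ≠ w)
    (hn : ¬ G.Adj v w) (γ : ℝ) (h : IsGreatest (gammaSet G) γ) : 1 ≤ γ := by
  classical
  have hmem : (1 : ℝ) ∈ gammaSet G := by
    refine ⟨{{v}, {w}}, ⟨?_, ?_⟩, ?_⟩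
    · intro C hC
      rcases Finset.mem_insert.mp hC with rfl | hC
      · exact ⟨Finset.singleton_nonempty v, by simp [SimpleGraph.isClique_iff, Set.Pairwise]⟩
      · rw [Finset.mem_singleton] at hC; subst hC
        exact ⟨Finset.singleton_nonempty w, by simp [SimpleGraph.isClique_iff, Set.Pairwise]⟩
    · have hvw' : ({v} : Finset V) ≠ {w} := by
        simp [Finset.singleton_injective.ne_iff, hvw]
      intro C hC D hD hne
      simp only [Finset.coe_insert, Finset.coe_singleton, Set.mem_insert_iff,
        Set.mem_singleton_iff] at hC hD
      have hn' : ¬ G.Adj w v := fun e => hn e.symm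
      rcases hC with rfl | rfl <;> rcases hD with rfl | rfl
      · exact absurd rfl hne
      · intro a ha b hb
        rw [Finset.mem_singleton] at ha hb; subst ha; subst hb; exact ⟨hvw, hn⟩
      · intro a ha b hb
        rw [Finset.mem_singleton] at ha hb; subst ha; subst hb; exact ⟨hvw.symm, hn'⟩
      · exact absurd rfl hne
    · have hvw' : ({v} : Finset V) ≠ {w} := by
        simp [Finset.singleton_injective.ne_iff, hvw]
      rw [cliqueCollectionWeight, Finset.sum_pair hvw']
      norm_num
  exact h.2 hmem

/-- If at least one of two finite graphs is not complete, then
`γ(G₁ ⋆ G₂) = max(γ(G₁), γ(G₂))`. -/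
theorem gamma_graphJoin {V₁ V₂ : Type*} [Fintype V₁] [Fintype V₂]
    (G₁ : SimpleGraph V₁) (G₂ : SimpleGraph V₂)
    (hnc : (∃ v w : V₁, v ≠ w ∧ ¬ G₁.Adj v w) ∨ (∃ v w : V₂, v ≠ w ∧ ¬ G₂.Adj v w))
    (γ₁ γ₂ : ℝ) (h₁ : IsGreatest (gammaSet G₁) γ₁) (h₂ : IsGreatest (gammaSet G₂) γ₂) :
    IsGreatest (gammaSet (G₁.graphJoin G₂)) (max γ₁ γ₂) := by
  set H := G₁.graphJoin G₂ with hH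
  let embL : V₁ ↪ V₁ ⊕ V₂ := ⟨Sum.inl, Sum.inl_injective⟩
  let embR : V₂ ↪ V₁ ⊕ V₂ := ⟨Sum.inr, Sum.inr_injective⟩
  have hadjL : ∀ a b, H.Adj (embL a) (embL b) ↔ G₁.Adj a b := fun _ _ => Iff.rfl
  have hadjR : ∀ a b, H.Adj (embR a) (embR b) ↔ G₂.Adj a b := fun _ _ => Iff.rfl
  have hone : (1 : ℝ) ≤ max γ₁ γ₂ := by
    rcases hnc with ⟨v, w, hvw, hn⟩ | ⟨v, w, hvw, hn⟩
    · exact le_max_of_le_left (one_le_gamma G₁ v w hvw hn γ₁ h₁)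
    · exact le_max_of_le_right (one_le_gamma G₂ v w hvw hn γ₂ h₂)
  constructor
  · -- membership
    rcases le_total γ₁ γ₂ with hle | hle
    · rw [max_eq_right hle]
      obtain ⟨𝒞, h𝒞, rfl⟩ := h₂.1
      obtain ⟨𝒞', h𝒞', hw⟩ := push_cliqueCollection G₂ H embR hadjR 𝒞 h𝒞
      exact ⟨𝒞', h𝒞', hw.symm⟩
    · rw [max_eq_left hle]
      obtain ⟨𝒞, h𝒞, rfl⟩ := h₁.1
      obtain ⟨𝒞', h𝒞', hw⟩ := push_cliqueCollection G₁ H embL hadjL 𝒞 h𝒞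
      exact ⟨𝒞', h𝒞', hw.symm⟩
  · -- upper bound
    rintro x ⟨𝒞, h𝒞, rfl⟩
    by_cases hP : ∃ C ∈ 𝒞, ∃ a : V₁, Sum.inl a ∈ C
    · by_cases hQ : ∃ D ∈ 𝒞, ∃ b : V₂, Sum.inr b ∈ D
      · -- mixed: 𝒞 is a single clique, weight < 1
        obtain ⟨C, hC, a, ha⟩ := hP
        obtain ⟨D, hD, b, hb⟩ := hQ
        have hCD : C = D := by
          by_contra hne
          exact (h𝒞.2 hC hD hne (Sum.inl a) ha (Sum.inr b) hb).2 trivial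
        subst hCD
        have hsingle : 𝒞 = {C} := by
          apply Finset.eq_singleton_iff_unique_mem.mpr
          refine ⟨hC, fun E hE => ?_⟩
          by_contra hne
          obtain ⟨x, hx⟩ := (h𝒞.1 E hE).1
          rcases x with c | c
          · exact (h𝒞.2 hE hC hne (Sum.inl c) hx (Sum.inr b) hb).2 trivial
          · exact (h𝒞.2 hE hC hne (Sum.inr c) hx (Sum.inl a) ha).2 trivial
        rw [hsingle, cliqueCollectionWeight, Finset.sum_singleton]
        have : (0 : ℝ) < (1 / 2 : ℝ) ^ C.card := by positivity
        linarith
      · -- everything is on the left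
        push_neg at hQ
        have hr : ∀ C ∈ 𝒞, ∀ x ∈ C, x ∈ Set.range embL := by
          intro C hC x hx
          rcases x with a | b
          · exact ⟨a, rfl⟩
          · exact absurd hx (hQ C hC b)
        obtain ⟨𝒞', h𝒞', hw⟩ := pull_cliqueCollection G₁ H embL hadjL 𝒞 h𝒞 hr
        calc cliqueCollectionWeight 𝒞 = cliqueCollectionWeight 𝒞' := hw.symm
          _ ≤ γ₁ := h₁.2 ⟨𝒞', h𝒞', rfl⟩
          _ ≤ max γ₁ γ₂ := le_max_left _ _
    · -- everything is on the right
      push_neg at hP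
      have hr : ∀ C ∈ 𝒞, ∀ x ∈ C, x ∈ Set.range embR := by
        intro C hC x hx
        rcases x with a | b
        · exact absurd hx (hP C hC a)
        · exact ⟨b, rfl⟩
      obtain ⟨𝒞', h𝒞', hw⟩ := pull_cliqueCollection G₂ H embR hadjR 𝒞 h𝒞 hr
      calc cliqueCollectionWeight 𝒞 = cliqueCollectionWeight 𝒞' := hw.symm
        _ ≤ γ₂ := h₂.2 ⟨𝒞', h𝒞', rfl⟩
        _ ≤ max γ₁ γ₂ := le_max_right _ _
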